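/- If f satisfies the Drygas inequality, then the odd part fᵒ satisfies ‖fᵒ(x)+fᵒ(y)‖ ≤ ‖fᵒ(x+y)‖ for all x, y ∈ G. -/

import Mathlib

open scoped RealInnerProductSpace

set_option maxHeartbeats 2000000 in
theorem stmt12 {G E : Type*} [AddCommGroup G] [NormedAddCommGroup E]
    [InnerProductSpace ℝ E] (f : G → E)
    (h : ∀ x y : G, ‖2 • f x + f y + f (-y) - f (x - y)‖ ≤ ‖f (x + y)‖)
    (fo : G → E) (hfo : ∀ x, fo x = (2 : ℝ)⁻¹ • (f x - f (-x))) :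
    ∀ x y : G, ‖fo x + fo y‖ ≤ ‖fo (x + y)‖ := by
  -- f 0 = 0
  have hf0 : f 0 = 0 := by
    have h0 := h 0 0
    simp only [add_zero, sub_zero, neg_zero, two_smul] at h0
    have : f 0 + f 0 + f 0 + f 0 - f 0 = f 0 + f 0 + f 0 := by abel
    rw [this] at h0
    have h1 : ‖f 0 + f 0 + f 0‖ = 3 * ‖f 0‖ := by
      have e : f 0 + f 0 + f 0 = (3 : ℝ) • f 0 := by module
      rw [e, norm_smul]; simp
    rw [h1] at h0
    have : ‖f 0‖ = 0 := by nlinarith [norm_nonneg (f 0)]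
    simpa using this
  -- doubling: f (z + z) = f z + f z + f z + f (-z)
  have hdbl : ∀ z : G, f (z + z) = f z + f z + f z + f (-z) := by
    intro z
    have h1 := h z (-z)
    have e1 : z - -z = z + z := by abel
    have e2 : z + -z = (0 : G) := by abel
    rw [e1, e2, hf0, norm_zero, neg_neg, two_smul] at h1
    have h2 : f z + f z + f (-z) + f z - f (z + z) = 0 := by
      have := norm_le_zero_iff.mp h1
      exact this
    have : f (z + z) = f z + f z + f (-z) + f z - 0 := by
      rw [← h2]; abel
    rw [this]; abel
  intro x y
  set p := f x with hp
  set p' := f (-x) with hp'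
  set q := f y with hq
  set q' := f (-y) with hq'
  set u := f (x + y) with hu
  set u' := f (-(x + y)) with hu'
  set w := f (x - y) with hw
  set w' := f (y - x) with hw'
  -- collect the 12 instances as vector-norm inequalities
  have h1 : ‖p + p + q + q' - w‖ ≤ ‖u‖ := by
    have := h x y; rwa [two_smul, show f x + f x + f y + f (-y) - f (x - y) = p + p + q + q' - w from by abel] at this
  have h2 : ‖p + p + q' + q - u‖ ≤ ‖w‖ := by
    have := h x (-y)
    rw [neg_neg, two_smul, show x - -y = x + y from by abel, show x + -y = x - y from by abel] at this
    exact this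
  have h3 : ‖p' + p' + q + q' - u'‖ ≤ ‖w'‖ := by
    have := h (-x) y
    rw [two_smul, show -x - y = -(x + y) from by abel, show -x + y = y - x from by abel] at this
    exact this
  have h4 : ‖p' + p' + q' + q - w'‖ ≤ ‖u'‖ := by
    have := h (-x) (-y)
    rw [neg_neg, two_smul, show -x - -y = y - x from by abel, show -x + -y = -(x + y) from by abel] at this
    exact this
  have h5 : ‖q + q + p + p' - w'‖ ≤ ‖u‖ := by
    have := h y x
    rw [two_smul, show y + x = x + y from by abel] at this
    exact this
  have h6 : ‖q + q + p' + p - u‖ ≤ ‖w'‖ := by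
    have := h y (-x)
    rw [neg_neg, two_smul, show y - -x = x + y from by abel, show y + -x = y - x from by abel] at this
    exact this
  have h7 : ‖q' + q' + p + p' - u'‖ ≤ ‖w‖ := by
    have := h (-y) x
    rw [two_smul, show -y - x = -(x + y) from by abel, show -y + x = x - y from by abel] at this
    exact this
  have h8 : ‖q' + q' + p' + p - w‖ ≤ ‖u'‖ := by
    have := h (-y) (-x)
    rw [neg_neg, two_smul, show -y - -x = x - y from by abel, show -y + -x = -(x + y) from by abel] at this
    exact this
  have hdx : f (x + x) = p + p + p + p' := hdbl x
  have hdx' : f (-x + -x) = p' + p' + p' + p := by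
    have := hdbl (-x); rwa [neg_neg] at this
  have hdy : f (y + y) = q + q + q + q' := hdbl y
  have hdy' : f (-y + -y) = q' + q' + q' + q := by
    have := hdbl (-y); rwa [neg_neg] at this
  have h13 : ‖w + w + u + u' - (q' + q' + q' + q)‖ ≤ ‖p + p + p + p'‖ := by
    have := h (x - y) (x + y)
    rw [two_smul, show x - y - (x + y) = -y + -y from by abel,
      show x - y + (x + y) = x + x from by abel, hdx, hdy',
      show -(x + y) = -(x + y) from rfl] at this
    rwa [show f (x - y) + f (x - y) + f (x + y) + f (-(x + y)) - (q' + q' + q' + q)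
      = w + w + u + u' - (q' + q' + q' + q) from by rw [← hw, ← hu, ← hu']] at this
  have h14 : ‖w + w + u' + u - (p + p + p + p')‖ ≤ ‖q' + q' + q' + q‖ := by
    have := h (x - y) (-(x + y))
    rw [neg_neg, two_smul, show x - y - -(x + y) = x + x from by abel,
      show x - y + -(x + y) = -y + -y from by abel, hdx, hdy'] at this
    exact this
  have h15 : ‖w' + w' + u + u' - (p' + p' + p' + p)‖ ≤ ‖q + q + q + q'‖ := by
    have := h (y - x) (x + y)
    rw [two_smul, show y - x - (x + y) = -x + -x from by abel,
      show y - x + (x + y) = y + y from by abel, hdx', hdy] at this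
    exact this
  have h16 : ‖w' + w' + u' + u - (q + q + q + q')‖ ≤ ‖p' + p' + p' + p‖ := by
    have := h (y - x) (-(x + y))
    rw [neg_neg, two_smul, show y - x - -(x + y) = y + y from by abel,
      show y - x + -(x + y) = -x + -x from by abel, hdx', hdy] at this
    exact this
  -- reduce goal to norms of c and d
  have hgoal : fo x + fo y = (2 : ℝ)⁻¹ • (p - p' + q - q') := by
    rw [hfo x, hfo y, ← smul_add]; congr 1; abel
  have hgoal2 : fo (x + y) = (2 : ℝ)⁻¹ • (u - u') := by rw [hfo (x + y)]
  rw [hgoal, hgoal2, norm_smul, norm_smul]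
  have h2pos : (0:ℝ) < ‖(2 : ℝ)⁻¹‖ := by norm_num
  rw [mul_le_mul_iff_right₀ h2pos]
  set c := p - p' + q - q' with hc
  set d := u - u' with hd
  -- key inner product inequality
  have key : (⟪c, c⟫ : ℝ) ≤ ⟪c, d⟫ := by
    have sq : ∀ a b : E, ‖a‖ ≤ ‖b‖ → ⟪a, a⟫ ≤ ⟪b, b⟫ := by
      intro a b hab
      rw [real_inner_self_eq_norm_sq, real_inner_self_eq_norm_sq]
      exact pow_le_pow_left₀ (norm_nonneg a) hab 2
    have k1 := sq _ _ h1
    have k2 := sq _ _ h2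
    have k3 := sq _ _ h3
    have k4 := sq _ _ h4
    have k5 := sq _ _ h5
    have k6 := sq _ _ h6
    have k7 := sq _ _ h7
    have k8 := sq _ _ h8
    have k13 := sq _ _ h13
    have k14 := sq _ _ h14
    have k15 := sq _ _ h15
    have k16 := sq _ _ h16
    have s1 : (0:ℝ) ≤ ⟪(5:ℝ) • p + (3:ℝ) • p' + (3:ℝ) • q + (5:ℝ) • q'
        - (2:ℝ) • u - (2:ℝ) • u' - (3:ℝ) • w - w',
        (5:ℝ) • p + (3:ℝ) • p' + (3:ℝ) • q + (5:ℝ) • q'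
        - (2:ℝ) • u - (2:ℝ) • u' - (3:ℝ) • w - w'⟫ := real_inner_self_nonneg
    have s2 : (0:ℝ) ≤ ⟪(4:ℝ) • p' + (4:ℝ) • q - u - u' + w - (3:ℝ) • w',
        (4:ℝ) • p' + (4:ℝ) • q - u - u' + w - (3:ℝ) • w'⟫ := real_inner_self_nonneg
    simp only [hc, hd, inner_add_left, inner_add_right, inner_sub_left, inner_sub_right,
      inner_smul_left, inner_smul_right, RCLike.ofReal_real_eq_id, id_eq,
      conj_trivial] at k1 k2 k3 k4 k5 k6 k7 k8 k13 k14 k15 k16 s1 s2 ⊢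
    linarith [real_inner_comm p p', real_inner_comm p q, real_inner_comm p q',
      real_inner_comm p u, real_inner_comm p u', real_inner_comm p w, real_inner_comm p w',
      real_inner_comm p' q, real_inner_comm p' q', real_inner_comm p' u,
      real_inner_comm p' u', real_inner_comm p' w, real_inner_comm p' w',
      real_inner_comm q q', real_inner_comm q u, real_inner_comm q u',
      real_inner_comm q w, real_inner_comm q w', real_inner_comm q' u,
      real_inner_comm q' u', real_inner_comm q' w, real_inner_comm q' w',
      real_inner_comm u u', real_inner_comm u w, real_inner_comm u w',
      real_inner_comm u' w, real_inner_comm u' w', real_inner_comm w w']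
  -- conclude
  have hcd : ⟪c, d⟫ ≤ ‖c‖ * ‖d‖ := real_inner_le_norm c d
  have hcc : ⟪c, c⟫ = ‖c‖ * ‖c‖ := real_inner_self_eq_norm_mul_norm c
  rcases eq_or_lt_of_le (norm_nonneg c) with hc0 | hc0
  · rw [← hc0]; exact norm_nonneg d
  · nlinarith
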